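/- Fix an integer n ≥ 1 and holomorphic functions a,b,c,d : Δ → ℂ with a(0) = a'(0) = b(0) = c(0) = 0, d(0) ≠ 0, and a(z)d(z) − b(z)c(z) = z^(2n) for all z ∈ Δ; set F(z) = z^(−n)·(a(z), b(z); c(z), d(z)) on Δ*. If F is null, i.e. det F'(z) = 0 for all z ∈ Δ*, then the vanishing orders at 0 satisfy ord₀(b) + ord₀(c) = 2n (in particular b and c are not identically zero) and, if a is not identically zero, ord₀(a) ≥ 2n. -/

import Mathlib

/-!
STATEMENT 2: Vanishing orders in the normal form: for a null `F` in normal form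
with pole of order `n`, one has `ord₀(b) + ord₀(c) = 2n` (in particular `b`, `c`
are not identically zero near `0`) and `ord₀(a) ≥ 2n` if `a` is not identically zero.
-/

attribute [local instance] Matrix.normedAddCommGroup Matrix.normedSpace

open Metric Matrix Filter Topology

/-- Compatibility wrapper: the old `AnalyticAt.order`. -/
noncomputable def AnalyticAt.order {f : ℂ → ℂ} {z₀ : ℂ} (_ : AnalyticAt ℂ f z₀) : ℕ∞ :=
  analyticOrderAt f z₀

theorem AnalyticAt.order_eq_top_iff {f : ℂ → ℂ} {z₀ : ℂ} (hf : AnalyticAt ℂ f z₀) :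
    hf.order = ⊤ ↔ ∀ᶠ z in 𝓝 z₀, f z = 0 :=
  analyticOrderAt_eq_top

theorem AnalyticAt.order_eq_nat_iff {f : ℂ → ℂ} {z₀ : ℂ} (hf : AnalyticAt ℂ f z₀) (n : ℕ) :
    hf.order = n ↔
      ∃ (g : ℂ → ℂ), AnalyticAt ℂ g z₀ ∧ g z₀ ≠ 0 ∧ ∀ᶠ z in 𝓝 z₀, f z = (z - z₀) ^ n • g z :=
  hf.analyticOrderAt_eq_natCast

namespace VOaux

lemma enat_ex {x : ℕ∞} (h : x ≠ ⊤) : ∃ j : ℕ, x = (j : ℕ∞) := by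
  obtain ⟨j, hj⟩ := WithTop.ne_top_iff_exists.mp h
  exact ⟨j, hj.symm⟩

lemma analyticAt_deriv {f : ℂ → ℂ} (hf : AnalyticAt ℂ f 0) : AnalyticAt ℂ (deriv f) 0 := by
  obtain ⟨s, hs, h⟩ := hf.eventually_analyticAt.exists_mem
  exact (AnalyticOnNhd.deriv (fun x hx => h x hx)) 0 (mem_of_mem_nhds hs)

lemma order_congr {f g : ℂ → ℂ} (hf : AnalyticAt ℂ f 0) (hg : AnalyticAt ℂ g 0)
    (h : f =ᶠ[𝓝 0] g) : hf.order = hg.order := by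
  rcases eq_or_ne hg.order ⊤ with ht | ht
  · rw [ht, hf.order_eq_top_iff]
    filter_upwards [h, hg.order_eq_top_iff.mp ht] with z h1 h2
    rw [h1, h2]
  · obtain ⟨j, hj⟩ := enat_ex ht
    rw [hj, hf.order_eq_nat_iff]
    obtain ⟨g₁, hg₁, hg₁0, heq⟩ := (hg.order_eq_nat_iff j).mp hj
    exact ⟨g₁, hg₁, hg₁0, by filter_upwards [h, heq] with z h1 h2; rw [h1, h2]⟩

lemma order_mul {f g : ℂ → ℂ} (hf : AnalyticAt ℂ f 0) (hg : AnalyticAt ℂ g 0)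
    (hfg : AnalyticAt ℂ (fun z => f z * g z) 0) :
    hfg.order = hf.order + hg.order := by
  rcases eq_or_ne hf.order ⊤ with ht | ht
  · rw [ht, top_add, hfg.order_eq_top_iff]
    filter_upwards [hf.order_eq_top_iff.mp ht] with z h1
    simp [h1]
  rcases eq_or_ne hg.order ⊤ with ht2 | ht2
  · rw [ht2, add_top, hfg.order_eq_top_iff]
    filter_upwards [hg.order_eq_top_iff.mp ht2] with z h1
    simp [h1]
  obtain ⟨p, hp⟩ := enat_ex ht
  obtain ⟨q, hq⟩ := enat_ex ht2
  rw [hp, hq, ← Nat.cast_add, hfg.order_eq_nat_iff]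
  obtain ⟨g₁, hg₁, hg₁0, heq₁⟩ := (hf.order_eq_nat_iff p).mp hp
  obtain ⟨g₂, hg₂, hg₂0, heq₂⟩ := (hg.order_eq_nat_iff q).mp hq
  refine ⟨fun z => g₁ z * g₂ z, hg₁.mul hg₂, mul_ne_zero hg₁0 hg₂0, ?_⟩
  filter_upwards [heq₁, heq₂] with z h1 h2
  rw [h1, h2]
  simp only [sub_zero, smul_eq_mul]
  ring

lemma order_const_pow {C : ℂ} (hC : C ≠ 0) (k : ℕ)
    (h : AnalyticAt ℂ (fun z => C * z ^ k) 0) : h.order = k := by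
  rw [h.order_eq_nat_iff]
  exact ⟨fun _ => C, analyticAt_const, hC,
    by filter_upwards with z; simp only [sub_zero, smul_eq_mul]; ring⟩

lemma order_pow (k : ℕ) (h : AnalyticAt ℂ (fun z : ℂ => z ^ k) 0) : h.order = k := by
  rw [h.order_eq_nat_iff]
  exact ⟨fun _ => 1, analyticAt_const, one_ne_zero,
    by filter_upwards with z; simp [smul_eq_mul]⟩

lemma order_eq_zero {f : ℂ → ℂ} (hf : AnalyticAt ℂ f 0) (h : f 0 ≠ 0) : hf.order = 0 := by
  rw [show ((0 : ℕ∞)) = ((0 : ℕ) : ℕ∞) from rfl, hf.order_eq_nat_iff]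
  exact ⟨f, hf, h, by filter_upwards with z; simp⟩

lemma order_ne_zero {f : ℂ → ℂ} (hf : AnalyticAt ℂ f 0) (h : f 0 = 0) : hf.order ≠ 0 := by
  intro h0
  rw [show ((0 : ℕ∞)) = ((0 : ℕ) : ℕ∞) from rfl, hf.order_eq_nat_iff] at h0
  obtain ⟨g₁, hg₁, hg₁0, heq⟩ := h0
  have := heq.self_of_nhds
  simp only [sub_zero, pow_zero, one_smul] at this
  exact hg₁0 (this ▸ h)

lemma order_deriv {f : ℂ → ℂ} (hf : AnalyticAt ℂ f 0) (hf' : AnalyticAt ℂ (deriv f) 0)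
    {m : ℕ} (h : hf.order = ((m + 1 : ℕ) : ℕ∞)) : hf'.order = m := by
  obtain ⟨g, hg, hg0, heq⟩ := (hf.order_eq_nat_iff (m + 1)).mp h
  have hd : deriv f =ᶠ[𝓝 0] fun z => z ^ m * ((m + 1 : ℂ) * g z + z * deriv g z) := by
    have h1 : deriv f =ᶠ[𝓝 0] deriv (fun z => (z - 0) ^ (m + 1) • g z) :=
      Filter.EventuallyEq.deriv heq
    filter_upwards [h1, hg.eventually_analyticAt] with z h1z h2z
    rw [h1z]
    have : HasDerivAt (fun z : ℂ => (z - 0) ^ (m + 1) • g z)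
        (((m : ℂ) + 1) * z ^ m * g z + z ^ (m + 1) * deriv g z) z := by
      simp only [sub_zero, smul_eq_mul]
      have := (hasDerivAt_pow (m + 1) z).fun_mul h2z.differentiableAt.hasDerivAt
      simpa using this
    rw [this.deriv]
    ring
  have hh : AnalyticAt ℂ (fun z => (m + 1 : ℂ) * g z + z * deriv g z) 0 :=
    (analyticAt_const.mul hg).add (analyticAt_id.mul (analyticAt_deriv hg))
  rw [order_congr hf' ((analyticAt_id.pow m).mul hh) hd,
    order_mul (analyticAt_id.pow m) hh ((analyticAt_id.pow m).mul hh),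
    order_pow m, order_eq_zero hh ?_, add_zero]
  intro hc
  apply hg0
  have h2 : ((m : ℂ) + 1) * g 0 = 0 := by simpa using hc
  exact (mul_eq_zero.mp h2).resolve_left (by exact_mod_cast Nat.succ_ne_zero m)

lemma order_deriv_top {f : ℂ → ℂ} (hf : AnalyticAt ℂ f 0) (hf' : AnalyticAt ℂ (deriv f) 0)
    (h : hf.order = ⊤) : hf'.order = ⊤ := by
  rw [hf'.order_eq_top_iff]
  have h1 : f =ᶠ[𝓝 0] (fun _ => (0:ℂ)) := hf.order_eq_top_iff.mp h
  filter_upwards [Filter.EventuallyEq.deriv h1] with z hz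
  simpa using hz

lemma exists_of_order_ge {f : ℂ → ℂ} (hf : AnalyticAt ℂ f 0) {k : ℕ}
    (h : (k : ℕ∞) ≤ hf.order) :
    ∃ h₁, AnalyticAt ℂ h₁ 0 ∧ ∀ᶠ z in 𝓝 (0:ℂ), f z = z ^ k * h₁ z := by
  rcases eq_or_ne hf.order ⊤ with ht | ht
  · refine ⟨fun _ => 0, analyticAt_const, ?_⟩
    filter_upwards [hf.order_eq_top_iff.mp ht] with z hz
    simp [hz]
  · obtain ⟨j, hj⟩ := enat_ex ht
    obtain ⟨g₁, hg₁, hg₁0, heq⟩ := (hf.order_eq_nat_iff j).mp hj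
    have hkj : k ≤ j := by rw [hj] at h; exact_mod_cast h
    refine ⟨fun z => z ^ (j - k) * g₁ z, (analyticAt_id.pow _).mul hg₁, ?_⟩
    filter_upwards [heq] with z hz
    rw [hz]
    simp only [sub_zero, smul_eq_mul]
    rw [← mul_assoc, ← pow_add]
    congr 2
    omega

lemma order_ge_of_exists {f : ℂ → ℂ} (hf : AnalyticAt ℂ f 0) {k : ℕ}
    (h : ∃ h₁, AnalyticAt ℂ h₁ 0 ∧ ∀ᶠ z in 𝓝 (0:ℂ), f z = z ^ k * h₁ z) :
    (k : ℕ∞) ≤ hf.order := by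
  obtain ⟨h₁, hh₁, heq⟩ := h
  have := order_congr hf ((analyticAt_id.pow k).mul hh₁) heq
  rw [this, order_mul (analyticAt_id.pow k) hh₁ ((analyticAt_id.pow k).mul hh₁), order_pow k]
  exact le_self_add

lemma order_sub_ge {f g : ℂ → ℂ} (hf : AnalyticAt ℂ f 0) (hg : AnalyticAt ℂ g 0)
    (hfg : AnalyticAt ℂ (fun z => f z - g z) 0) {k : ℕ}
    (h1 : (k : ℕ∞) ≤ hf.order) (h2 : (k : ℕ∞) ≤ hg.order) :
    (k : ℕ∞) ≤ hfg.order := by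
  obtain ⟨u, hu, hue⟩ := exists_of_order_ge hf h1
  obtain ⟨v, hv, hve⟩ := exists_of_order_ge hg h2
  refine order_ge_of_exists hfg ⟨fun z => u z - v z, hu.sub hv, ?_⟩
  filter_upwards [hue, hve] with z e1 e2
  rw [e1, e2]; ring

lemma order_sub_of_lt {f g : ℂ → ℂ} (hf : AnalyticAt ℂ f 0) (hg : AnalyticAt ℂ g 0)
    (hfg : AnalyticAt ℂ (fun z => f z - g z) 0) {p : ℕ}
    (h1 : hf.order = (p : ℕ∞)) (h2 : ((p + 1 : ℕ) : ℕ∞) ≤ hg.order) :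
    hfg.order = (p : ℕ∞) := by
  obtain ⟨g₁, hg₁, hg₁0, heq⟩ := (hf.order_eq_nat_iff p).mp h1
  obtain ⟨v, hv, hve⟩ := exists_of_order_ge hg h2
  rw [hfg.order_eq_nat_iff]
  refine ⟨fun z => g₁ z - z * v z, hg₁.sub (analyticAt_id.mul hv), by simpa using hg₁0, ?_⟩
  filter_upwards [heq, hve] with z e1 e2
  rw [e1, e2]
  simp only [sub_zero, smul_eq_mul]
  ring

lemma order_sub_of_gt {f g : ℂ → ℂ} (hf : AnalyticAt ℂ f 0) (hg : AnalyticAt ℂ g 0)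
    (hfg : AnalyticAt ℂ (fun z => f z - g z) 0) {p : ℕ}
    (h1 : hg.order = (p : ℕ∞)) (h2 : ((p + 1 : ℕ) : ℕ∞) ≤ hf.order) :
    hfg.order = (p : ℕ∞) := by
  obtain ⟨g₁, hg₁, hg₁0, heq⟩ := (hg.order_eq_nat_iff p).mp h1
  obtain ⟨v, hv, hve⟩ := exists_of_order_ge hf h2
  rw [hfg.order_eq_nat_iff]
  refine ⟨fun z => z * v z - g₁ z, (analyticAt_id.mul hv).sub hg₁, by simpa using hg₁0, ?_⟩
  filter_upwards [heq, hve] with z e1 e2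
  rw [e1, e2]
  simp only [sub_zero, smul_eq_mul]
  ring

end VOaux

/-- The open unit disc in `ℂ`. -/
noncomputable def Disc : Set ℂ := Metric.ball (0 : ℂ) 1

/-- The punctured open unit disc in `ℂ`. -/
noncomputable def PDisc : Set ℂ := Metric.ball (0 : ℂ) 1 \ {0}

theorem vanishing_orders_normal_form
    (n : ℕ) (hn : 1 ≤ n)
    (a b c d : ℂ → ℂ)
    (ha : DifferentiableOn ℂ a Disc) (hb : DifferentiableOn ℂ b Disc)
    (hc : DifferentiableOn ℂ c Disc) (hd : DifferentiableOn ℂ d Disc)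
    (ha0 : a 0 = 0) (ha'0 : deriv a 0 = 0) (hb0 : b 0 = 0) (hc0 : c 0 = 0)
    (hd0 : d 0 ≠ 0)
    (hdet : ∀ z ∈ Disc, a z * d z - b z * c z = z ^ (2 * n))
    (F : ℂ → Matrix (Fin 2) (Fin 2) ℂ)
    (hF : ∀ z, F z = (z ^ n)⁻¹ • !![a z, b z; c z, d z])
    (hnull : ∀ z ∈ PDisc, (deriv F z).det = 0) :
    ∀ (hbA : AnalyticAt ℂ b 0) (hcA : AnalyticAt ℂ c 0) (haA : AnalyticAt ℂ a 0),
      analyticOrderAt b 0 ≠ ⊤ ∧ analyticOrderAt c 0 ≠ ⊤ ∧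
      analyticOrderAt b 0 + analyticOrderAt c 0 = ((2 * n : ℕ) : ℕ∞) ∧
      (analyticOrderAt a 0 ≠ ⊤ → ((2 * n : ℕ) : ℕ∞) ≤ analyticOrderAt a 0) := by
  intro hbA hcA haA
  change hbA.order ≠ ⊤ ∧ hcA.order ≠ ⊤ ∧
      hbA.order + hcA.order = ((2 * n : ℕ) : ℕ∞) ∧
      (haA.order ≠ ⊤ → ((2 * n : ℕ) : ℕ∞) ≤ haA.order)
  obtain ⟨m, rfl⟩ : ∃ m, n = m + 1 := ⟨n - 1, by omega⟩
  have hD : IsOpen Disc := Metric.isOpen_ball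
  have h0D : (0:ℂ) ∈ Disc := by simp [Disc]
  have hDn : Disc ∈ 𝓝 (0:ℂ) := hD.mem_nhds h0D
  have hdA : AnalyticAt ℂ d 0 := (hd.analyticOnNhd hD) 0 h0D
  -- derivative at points of Disc
  have hder : ∀ f : ℂ → ℂ, DifferentiableOn ℂ f Disc → ∀ z ∈ Disc,
      HasDerivAt f (deriv f z) z :=
    fun f hf z hz => (hf.differentiableAt (hD.mem_nhds hz)).hasDerivAt
  -- derivative of the determinant identity
  have hI1' : ∀ z ∈ Disc, deriv a z * d z + a z * deriv d z
      - (deriv b z * c z + b z * deriv c z) = (2*(m+1) : ℕ) * z ^ (2*m+1) := by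
    intro z hz
    have h1 : HasDerivAt (fun w => a w * d w - b w * c w)
        (deriv a z * d z + a z * deriv d z - (deriv b z * c z + b z * deriv c z)) z :=
      ((hder a ha z hz).mul (hder d hd z hz)).sub ((hder b hb z hz).mul (hder c hc z hz))
    have h2 : HasDerivAt (fun w : ℂ => w ^ (2*(m+1)))
        (deriv a z * d z + a z * deriv d z - (deriv b z * c z + b z * deriv c z)) z := by
      refine h1.congr_of_eventuallyEq ?_
      filter_upwards [hD.mem_nhds hz] with w hw
      exact (hdet w hw).symm
    have h3 := h2.unique (hasDerivAt_pow (2*(m+1)) z)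
    rw [h3]
    have e : 2*(m+1)-1 = 2*m+1 := by omega
    rw [e]
  -- the null condition gives the second identity
  have hI2 : ∀ z ∈ PDisc, deriv a z * deriv d z - deriv b z * deriv c z
      = ((m:ℂ)+1)^2 * z ^ (2*m) := by
    intro z hz
    obtain ⟨hzD, hz0'⟩ := hz
    have hzD' : z ∈ Disc := hzD
    have hz0 : z ≠ 0 := by simpa using hz0'
    have hMd : HasDerivAt (fun w => !![a w, b w; c w, d w])
        (!![deriv a z, deriv b z; deriv c z, deriv d z]) z := by
      have key : ∀ (i j : Fin 2), HasDerivAt (fun w => !![a w, b w; c w, d w] i j)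
          (!![deriv a z, deriv b z; deriv c z, deriv d z] i j) z := by
        intro i j
        fin_cases i <;> fin_cases j <;> simp only [Matrix.cons_val', Matrix.cons_val_zero,
          Matrix.cons_val_one, Matrix.head_cons, Matrix.head_fin_const, Matrix.empty_val',
          Matrix.cons_val_fin_one, Fin.isValue]
        · exact hder a ha z hzD'
        · exact hder b hb z hzD'
        · exact hder c hc z hzD'
        · exact hder d hd z hzD'
      exact hasDerivAt_pi.mpr fun i => hasDerivAt_pi.mpr fun j => key i j
    have hinv : HasDerivAt (fun w : ℂ => (w ^ (m+1))⁻¹)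
        (-(((m:ℂ)+1) * z ^ m) / (z ^ (m+1)) ^ 2) z := by
      have h := (hasDerivAt_pow (m+1) z).inv (pow_ne_zero _ hz0)
      refine h.congr_deriv ?_
      push_cast
      ring
    have hFd : HasDerivAt F ((z ^ (m+1))⁻¹ • !![deriv a z, deriv b z; deriv c z, deriv d z]
        + (-(((m:ℂ)+1) * z ^ m) / (z ^ (m+1)) ^ 2) • !![a z, b z; c z, d z]) z := by
      have h := hinv.smul hMd
      refine h.congr_of_eventuallyEq ?_
      filter_upwards with w
      rw [hF w]; rfl
    have h0 := hnull z ⟨hzD, hz0'⟩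
    have hFdd : deriv F z = (z ^ (m+1))⁻¹ • !![deriv a z, deriv b z; deriv c z, deriv d z]
        + (-(((m:ℂ)+1) * z ^ m) / (z ^ (m+1)) ^ 2) • !![a z, b z; c z, d z] := hFd.deriv
    rw [hFdd] at h0
    simp only [Matrix.det_fin_two, Matrix.of_apply, Matrix.add_apply, Matrix.smul_apply, smul_eq_mul,
      Matrix.cons_val', Matrix.cons_val_zero, Matrix.cons_val_one, Matrix.head_cons,
      Matrix.head_fin_const, Matrix.empty_val', Matrix.cons_val_fin_one, Fin.isValue] at h0
    have hD1 := hdet z hzD'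
    have hD2 := hI1' z hzD'
    have hzp : z ^ (m+1) ≠ 0 := pow_ne_zero _ hz0
    push_cast at hD1 hD2 ⊢
    field_simp at h0
    have E : (z * deriv a z - ((m:ℂ)+1) * a z) * (z * deriv d z - ((m:ℂ)+1) * d z)
        - (z * deriv b z - ((m:ℂ)+1) * b z) * (z * deriv c z - ((m:ℂ)+1) * c z) = 0 := by
      apply mul_left_cancel₀ (pow_ne_zero (4*m+2) hz0)
      rw [mul_zero]
      linear_combination z ^ (2*m+2) * h0
    apply mul_left_cancel₀ (pow_ne_zero 2 hz0)
    linear_combination E + ((m:ℂ)+1)*z*hD2 - ((m:ℂ)+1)^2*hD1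
  -- analyticity of derivatives at 0
  have haA' : AnalyticAt ℂ (deriv a) 0 := VOaux.analyticAt_deriv haA
  have hbA' : AnalyticAt ℂ (deriv b) 0 := VOaux.analyticAt_deriv hbA
  have hcA' : AnalyticAt ℂ (deriv c) 0 := VOaux.analyticAt_deriv hcA
  have hdA' : AnalyticAt ℂ (deriv d) 0 := VOaux.analyticAt_deriv hdA
  have QA : AnalyticAt ℂ (fun z => deriv a z * deriv d z) 0 := haA'.mul hdA'
  have PA : AnalyticAt ℂ (fun z => deriv b z * deriv c z) 0 := hbA'.mul hcA'
  have QPA : AnalyticAt ℂ (fun z => deriv a z * deriv d z - deriv b z * deriv c z) 0 := QA.sub PA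
  -- eventual identities at 0
  have hI1ev : (fun z => a z * d z - b z * c z) =ᶠ[𝓝 0] (fun z : ℂ => z ^ (2*(m+1))) := by
    filter_upwards [hDn] with z hz using hdet z hz
  have hrhs2 : AnalyticAt ℂ (fun z : ℂ => ((m:ℂ)+1)^2 * z ^ (2*m)) 0 :=
    analyticAt_const.mul (analyticAt_id.pow _)
  have hI2ev : (fun z => deriv a z * deriv d z - deriv b z * deriv c z)
      =ᶠ[𝓝 0] (fun z : ℂ => ((m:ℂ)+1)^2 * z ^ (2*m)) := by
    apply (AnalyticAt.frequently_eq_iff_eventually_eq QPA hrhs2).mp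
    have hPD : PDisc ∈ 𝓝[≠] (0:ℂ) := by
      rw [mem_nhdsWithin]
      exact ⟨Metric.ball 0 1, Metric.isOpen_ball, by simp, fun x hx => ⟨hx.1, hx.2⟩⟩
    exact Filter.Eventually.frequently
      (by filter_upwards [hPD] with z hz using hI2 z hz)
  -- basic orders
  have hdord : hdA.order = 0 := VOaux.order_eq_zero hdA hd0
  have hpow1 : AnalyticAt ℂ (fun z : ℂ => z ^ (2*(m+1))) 0 := analyticAt_id.pow _
  have hsubA : AnalyticAt ℂ (fun z => a z * d z - b z * c z) 0 := (haA.mul hdA).sub (hbA.mul hcA)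
  have hsubord : hsubA.order = ((2*(m+1) : ℕ) : ℕ∞) := by
    rw [VOaux.order_congr hsubA hpow1 hI1ev, VOaux.order_pow]
  have hQPord : QPA.order = ((2*m : ℕ) : ℕ∞) := by
    rw [VOaux.order_congr QPA hrhs2 hI2ev,
      VOaux.order_const_pow (pow_ne_zero 2 (Nat.cast_add_one_ne_zero m)) (2*m) hrhs2]
  -- b, c do not vanish identically
  have hbtop : hbA.order ≠ ⊤ := by
    intro htop
    have hb0' := hbA.order_eq_top_iff.mp htop
    have h1 : (fun z => a z * d z) =ᶠ[𝓝 0] (fun z : ℂ => z ^ (2*(m+1))) := by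
      filter_upwards [hI1ev, hb0'] with z e1 e2
      rw [e2] at e1; simpa using e1
    have hadord : (haA.mul hdA).order = ((2*(m+1):ℕ) : ℕ∞) := by
      rw [VOaux.order_congr (haA.mul hdA) hpow1 h1, VOaux.order_pow]
    rw [VOaux.order_mul haA hdA (haA.mul hdA), hdord, add_zero] at hadord
    have haord' : haA'.order = ((2*m+1 : ℕ) : ℕ∞) := by
      apply VOaux.order_deriv haA haA'
      rw [hadord]; (congr 1 <;> omega)
    have hbord' : hbA'.order = ⊤ := VOaux.order_deriv_top hbA hbA' htop
    have hQ : ((2*m+1 : ℕ) : ℕ∞) ≤ QA.order := by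
      rw [VOaux.order_mul haA' hdA' QA, haord']; exact le_self_add
    have hP : ((2*m+1 : ℕ) : ℕ∞) ≤ PA.order := by
      rw [VOaux.order_mul hbA' hcA' PA, hbord', top_add]; exact le_top
    have hh := VOaux.order_sub_ge QA PA QPA hQ hP
    rw [hQPord] at hh
    exact absurd (by exact_mod_cast hh : 2*m+1 ≤ 2*m) (by omega)
  have hctop : hcA.order ≠ ⊤ := by
    intro htop
    have hc0' := hcA.order_eq_top_iff.mp htop
    have h1 : (fun z => a z * d z) =ᶠ[𝓝 0] (fun z : ℂ => z ^ (2*(m+1))) := by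
      filter_upwards [hI1ev, hc0'] with z e1 e2
      rw [e2] at e1; simpa using e1
    have hadord : (haA.mul hdA).order = ((2*(m+1):ℕ) : ℕ∞) := by
      rw [VOaux.order_congr (haA.mul hdA) hpow1 h1, VOaux.order_pow]
    rw [VOaux.order_mul haA hdA (haA.mul hdA), hdord, add_zero] at hadord
    have haord' : haA'.order = ((2*m+1 : ℕ) : ℕ∞) := by
      apply VOaux.order_deriv haA haA'
      rw [hadord]; (congr 1 <;> omega)
    have hcord' : hcA'.order = ⊤ := VOaux.order_deriv_top hcA hcA' htop
    have hQ : ((2*m+1 : ℕ) : ℕ∞) ≤ QA.order := by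
      rw [VOaux.order_mul haA' hdA' QA, haord']; exact le_self_add
    have hP : ((2*m+1 : ℕ) : ℕ∞) ≤ PA.order := by
      rw [VOaux.order_mul hbA' hcA' PA, hcord', add_top]; exact le_top
    have hh := VOaux.order_sub_ge QA PA QPA hQ hP
    rw [hQPord] at hh
    exact absurd (by exact_mod_cast hh : 2*m+1 ≤ 2*m) (by omega)
  obtain ⟨p, hp⟩ := VOaux.enat_ex hbtop
  obtain ⟨q, hq⟩ := VOaux.enat_ex hctop
  have hp1 : 1 ≤ p := by
    have h := VOaux.order_ne_zero hbA hb0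
    rw [hp] at h
    exact Nat.pos_of_ne_zero (by rintro rfl; simp at h)
  have hq1 : 1 ≤ q := by
    have h := VOaux.order_ne_zero hcA hc0
    rw [hq] at h
    exact Nat.pos_of_ne_zero (by rintro rfl; simp at h)
  have hbord' : hbA'.order = ((p-1 : ℕ) : ℕ∞) := by
    apply VOaux.order_deriv hbA hbA'
    rw [hp]; (congr 1 <;> omega)
  have hcord' : hcA'.order = ((q-1 : ℕ) : ℕ∞) := by
    apply VOaux.order_deriv hcA hcA'
    rw [hq]; (congr 1 <;> omega)
  have hPord : PA.order = ((p-1+(q-1) : ℕ) : ℕ∞) := by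
    rw [VOaux.order_mul hbA' hcA' PA, hbord', hcord', ← Nat.cast_add]
  have hbcord : (hbA.mul hcA).order = ((p+q : ℕ) : ℕ∞) := by
    rw [VOaux.order_mul hbA hcA (hbA.mul hcA), hp, hq, ← Nat.cast_add]
  have main : p + q = 2*(m+1) ∧ (haA.order ≠ ⊤ → ((2*(m+1):ℕ):ℕ∞) ≤ haA.order) := by
    rcases eq_or_ne haA.order ⊤ with hα | hα
    · have ha0' := haA.order_eq_top_iff.mp hα
      have hneg : AnalyticAt ℂ (fun z : ℂ => (-1 : ℂ) * z ^ (2*(m+1))) 0 :=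
        analyticAt_const.mul (analyticAt_id.pow _)
      have h1 : (fun z => b z * c z) =ᶠ[𝓝 0] (fun z : ℂ => (-1:ℂ) * z ^ (2*(m+1))) := by
        filter_upwards [hI1ev, ha0'] with z e1 e2
        rw [e2, zero_mul, zero_sub] at e1
        linear_combination -e1
      have h2 : (hbA.mul hcA).order = ((2*(m+1):ℕ) : ℕ∞) := by
        rw [VOaux.order_congr (hbA.mul hcA) hneg h1,
          VOaux.order_const_pow (neg_ne_zero.mpr one_ne_zero) _ hneg]
      rw [hbcord] at h2
      exact ⟨by exact_mod_cast h2, fun h => absurd hα h⟩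
    · obtain ⟨r, hr⟩ := VOaux.enat_ex hα
      have hadord : (haA.mul hdA).order = ((r:ℕ) : ℕ∞) := by
        rw [VOaux.order_mul haA hdA (haA.mul hdA), hr, hdord, add_zero]
      rcases lt_trichotomy r (p+q) with hlt | heqr | hgt
      · exfalso
        have h2n : hsubA.order = ((r:ℕ):ℕ∞) := by
          apply VOaux.order_sub_of_lt (haA.mul hdA) (hbA.mul hcA) hsubA hadord
          rw [hbcord]
          exact_mod_cast hlt
        rw [hsubord] at h2n
        have hr2n : r = 2*(m+1) := by exact_mod_cast h2n.symm
        have haord' : haA'.order = ((2*m+1:ℕ):ℕ∞) := by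
          apply VOaux.order_deriv haA haA'
          rw [hr]; (congr 1 <;> omega)
        have hQ : ((2*m+1:ℕ):ℕ∞) ≤ QA.order := by
          rw [VOaux.order_mul haA' hdA' QA, haord']; exact le_self_add
        have hP : ((2*m+1:ℕ):ℕ∞) ≤ PA.order := by
          rw [hPord]
          exact_mod_cast (by omega : 2*m+1 ≤ p-1+(q-1))
        have hh := VOaux.order_sub_ge QA PA QPA hQ hP
        rw [hQPord] at hh
        exact absurd (by exact_mod_cast hh : 2*m+1 ≤ 2*m) (by omega)
      · have hr2 : 2 ≤ r := by omega
        have haord' : haA'.order = ((r-1:ℕ):ℕ∞) := by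
          apply VOaux.order_deriv haA haA'
          rw [hr]; (congr 1 <;> omega)
        have hPord2 : PA.order = ((r-2:ℕ):ℕ∞) := by
          rw [hPord]; (congr 1 <;> omega)
        have hQ : ((r-2+1:ℕ):ℕ∞) ≤ QA.order := by
          rw [VOaux.order_mul haA' hdA' QA, haord',
            show (r-2+1 : ℕ) = r-1 by omega]
          exact le_self_add
        have hh := VOaux.order_sub_of_gt QA PA QPA hPord2 hQ
        rw [hQPord] at hh
        have h2m : (2*m : ℕ) = r - 2 := by exact_mod_cast hh
        constructor
        · omega
        · intro _
          rw [hr]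
          exact_mod_cast (by omega : 2*(m+1) ≤ r)
      · have h2n : hsubA.order = ((p+q:ℕ):ℕ∞) := by
          apply VOaux.order_sub_of_gt (haA.mul hdA) (hbA.mul hcA) hsubA hbcord
          rw [hadord]
          exact_mod_cast hgt
        rw [hsubord] at h2n
        have hpq : p+q = 2*(m+1) := by exact_mod_cast h2n.symm
        refine ⟨hpq, fun _ => ?_⟩
        rw [hr]
        exact_mod_cast (by omega : 2*(m+1) ≤ r)
  refine ⟨hbtop, hctop, ?_, main.2⟩
  rw [hp, hq, ← Nat.cast_add, main.1]
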